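/- Let 1 < p ≤ q < ∞, 0 < β < 1, and let (u,v) ∈ A_{p,q}^β with σ = v^{-1/(p-1)} ∈ A_∞^β. Then there exist exponents p̃ < p and q̃ < q, with 1 < p̃ ≤ q̃, such that (u,v) ∈ A_{p̃,q̃}^β; moreover one may take p̃ = p − δ for suitable δ > 0 and q̃ = ((p−δ)/p)·q, so that p/q = p̃/q̃. -/

import Mathlib

open MeasureTheory Metric Set
open scoped ENNReal

noncomputable section

/-- The cube `Q(x,l)` with center `x` and half side length `l`, i.e. the closed
ball of radius `l` in the sup metric `d_∞` on `Fin n → ℝ`. -/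
def Cube {n : ℕ} (x : Fin n → ℝ) (l : ℝ) : Set (Fin n → ℝ) :=
  Metric.closedBall x l

/-- `Q(x,l)` belongs to the family `F_β` of cubes well inside `Ω`. -/
def MemF {n : ℕ} (Ω : Set (Fin n → ℝ)) (β : ℝ) (x : Fin n → ℝ) (l : ℝ) : Prop :=
  x ∈ Ω ∧ 0 < l ∧ l < β * Metric.infDist x Ωᶜ

/-- `w(E) = ∫_E w dx` for a weight `w`. -/
def wMeas {n : ℕ} (w : (Fin n → ℝ) → ℝ) (E : Set (Fin n → ℝ)) : ℝ≥0∞ :=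
  ∫⁻ y in E, ENNReal.ofReal (w y)

/-- The average `|Q|⁻¹ ∫_Q |f|`. -/
def avgI {n : ℕ} (f : (Fin n → ℝ) → ℝ) (Q : Set (Fin n → ℝ)) : ℝ≥0∞ :=
  (volume Q)⁻¹ * ∫⁻ y in Q, ENNReal.ofReal |f y|

/-- The local (uncentered) maximal function `M_β f`. -/
def locMax {n : ℕ} (Ω : Set (Fin n → ℝ)) (β : ℝ) (f : (Fin n → ℝ) → ℝ)
    (x : Fin n → ℝ) : ℝ≥0∞ :=
  ⨆ (c : Fin n → ℝ) (l : ℝ) (_ : MemF Ω β c l) (_ : x ∈ Cube c l), avgI f (Cube c l)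

/-- The centered local maximal function `M_β^c f`. -/
def locMaxC {n : ℕ} (Ω : Set (Fin n → ℝ)) (β : ℝ) (f : (Fin n → ℝ) → ℝ)
    (x : Fin n → ℝ) : ℝ≥0∞ :=
  ⨆ (l : ℝ) (_ : MemF Ω β x l), avgI f (Cube x l)

/-- A weight: a nonnegative (measurable) locally integrable function on `Ω`. -/
def IsWeight {n : ℕ} (Ω : Set (Fin n → ℝ)) (w : (Fin n → ℝ) → ℝ) : Prop :=
  (∀ x, 0 ≤ w x) ∧ Measurable w ∧ LocallyIntegrableOn w Ω

/-- `σ = v^{1-p'} = v^{-1/(p-1)}`. -/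
def sigW {n : ℕ} (v : (Fin n → ℝ) → ℝ) (p : ℝ) : (Fin n → ℝ) → ℝ :=
  fun y => v y ^ (-(1 / (p - 1)))

/-- The class `A_{p,q}^β`: `(u(Q)/|Q|)^{p/q} (σ(Q)/|Q|)^{p-1} ≤ C` for `Q ∈ F_β`. -/
def Apq {n : ℕ} (Ω : Set (Fin n → ℝ)) (β p q : ℝ) (u v : (Fin n → ℝ) → ℝ) : Prop :=
  ∃ C : ℝ≥0∞, C ≠ ⊤ ∧ ∀ x l, MemF Ω β x l →
    (wMeas u (Cube x l) / volume (Cube x l)) ^ (p / q) *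
      (wMeas (sigW v p) (Cube x l) / volume (Cube x l)) ^ (p - 1) ≤ C

/-- The class `D_β`: `w(2Q) ≤ C w(Q) < ∞` for all `Q ∈ F_β` with `2Q ∈ F_β`. -/
def Dbeta {n : ℕ} (Ω : Set (Fin n → ℝ)) (β : ℝ) (w : (Fin n → ℝ) → ℝ) : Prop :=
  ∃ C : ℝ≥0∞, C ≠ ⊤ ∧ ∀ x l, MemF Ω β x l → MemF Ω β x (2 * l) →
    wMeas w (Cube x (2 * l)) ≤ C * wMeas w (Cube x l) ∧ wMeas w (Cube x l) < ⊤

/-- The class `A_∞^β`: `w(E)/w(Q) ≤ c (|E|/|Q|)^δ` for measurable `E ⊆ Q ∈ F_β`. -/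
def AinfB {n : ℕ} (Ω : Set (Fin n → ℝ)) (β : ℝ) (w : (Fin n → ℝ) → ℝ) : Prop :=
  ∃ c δ : ℝ, 0 < c ∧ 0 < δ ∧ ∀ x l, MemF Ω β x l → ∀ E : Set (Fin n → ℝ),
    MeasurableSet E → E ⊆ Cube x l →
    wMeas w E ≤ ENNReal.ofReal c * (volume E / volume (Cube x l)) ^ δ * wMeas w (Cube x l)

/-- `M_β : L^p(v) → L^q(u)` is bounded. -/
def MaxBdd {n : ℕ} (Ω : Set (Fin n → ℝ)) (β p q : ℝ) (u v : (Fin n → ℝ) → ℝ) : Prop :=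
  ∃ C : ℝ≥0∞, C ≠ ⊤ ∧ ∀ f : (Fin n → ℝ) → ℝ,
    (∫⁻ x in Ω, (locMax Ω β f x) ^ q * ENNReal.ofReal (u x)) ^ (1 / q)
      ≤ C * (∫⁻ x in Ω, ENNReal.ofReal |f x| ^ p * ENNReal.ofReal (v x)) ^ (1 / p)

/-- `M_β^c : L^p(v) → L^q(u)` is bounded. -/
def MaxCBdd {n : ℕ} (Ω : Set (Fin n → ℝ)) (β p q : ℝ) (u v : (Fin n → ℝ) → ℝ) : Prop :=
  ∃ C : ℝ≥0∞, C ≠ ⊤ ∧ ∀ f : (Fin n → ℝ) → ℝ,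
    (∫⁻ x in Ω, (locMaxC Ω β f x) ^ q * ENNReal.ofReal (u x)) ^ (1 / q)
      ≤ C * (∫⁻ x in Ω, ENNReal.ofReal |f x| ^ p * ENNReal.ofReal (v x)) ^ (1 / p)

/-- The cloud `N_β(Q)` of the cube `Q = Q(x,l)`. -/
def cloud {n : ℕ} (Ω : Set (Fin n → ℝ)) (β : ℝ) (x : Fin n → ℝ) (l : ℝ) :
    Set (Fin n → ℝ) :=
  ⋃ (c : Fin n → ℝ) (r : ℝ) (_ : MemF Ω β c r)
    (_ : (Cube c r ∩ Cube x l).Nonempty), Cube c r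

/-- The center of the usual dyadic cube of side `2^(k+1)` indexed by `z`. -/
def dyCenter {n : ℕ} (k : ℤ) (z : Fin n → ℤ) : Fin n → ℝ :=
  fun i => (2 * (z i : ℝ) + 1) * (2:ℝ) ^ k

/-- The usual (half-open) dyadic cube of side `2^(k+1)` indexed by `z`;
its center is `dyCenter k z` and its half side length is `2^k`. -/
def dyCube {n : ℕ} (k : ℤ) (z : Fin n → ℤ) : Set (Fin n → ℝ) :=
  Set.univ.pi fun i => Ico ((z i : ℝ) * 2 ^ (k + 1)) (((z i : ℝ) + 1) * 2 ^ (k + 1))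

/-- `Q(x,l)` is a usual dyadic cube of `ℝ^n`. -/
def IsDyadic {n : ℕ} (x : Fin n → ℝ) (l : ℝ) : Prop :=
  ∃ (k : ℤ) (z : Fin n → ℤ), l = (2:ℝ) ^ k ∧ x = dyCenter k z

/-- `W` is a covering `W_t` of `Ω` as in the covering lemma: a covering of `Ω`
by pairwise disjoint dyadic cubes `R ∈ F_β` with `10R ∈ F_β` and
`2^{-t-3} d(x_R,Ω^c) ≤ l_R ≤ 2^{-t-1} d(x_R,Ω^c)`, and such that at most `M`
cubes of `W` meet the cloud of any `Q ∈ F_β` with `10Q ∉ F_β`. -/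
def IsWt {n : ℕ} (Ω : Set (Fin n → ℝ)) (β : ℝ) (t : ℕ)
    (W : Set (ℤ × (Fin n → ℤ))) : Prop :=
  (Ω ⊆ ⋃ q ∈ W, dyCube q.1 q.2) ∧
  (W.PairwiseDisjoint fun q => dyCube q.1 q.2) ∧
  (∀ q ∈ W, MemF Ω β (dyCenter q.1 q.2) ((2:ℝ) ^ q.1) ∧
    MemF Ω β (dyCenter q.1 q.2) (10 * (2:ℝ) ^ q.1) ∧
    (2:ℝ) ^ (-(t:ℤ) - 3) * Metric.infDist (dyCenter q.1 q.2) Ωᶜ ≤ (2:ℝ) ^ q.1 ∧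
    (2:ℝ) ^ q.1 ≤ (2:ℝ) ^ (-(t:ℤ) - 1) * Metric.infDist (dyCenter q.1 q.2) Ωᶜ) ∧
  (∃ M : ℕ, ∀ x l, MemF Ω β x l → ¬ MemF Ω β x (10 * l) →
    {q ∈ W | (dyCube q.1 q.2 ∩ cloud Ω β x l).Nonempty}.Finite ∧
    {q ∈ W | (dyCube q.1 q.2 ∩ cloud Ω β x l).Nonempty}.ncard ≤ M)

/-- `W_{t,Q}`: the union of the cubes of `W` meeting the cloud of `Q = Q(x,l)`. -/
def WtQ {n : ℕ} (Ω : Set (Fin n → ℝ)) (β : ℝ) (W : Set (ℤ × (Fin n → ℤ)))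
    (x : Fin n → ℝ) (l : ℝ) : Set (Fin n → ℝ) :=
  ⋃ q ∈ {q ∈ W | (dyCube q.1 q.2 ∩ cloud Ω β x l).Nonempty}, dyCube q.1 q.2

lemma rhi_aux {n : ℕ} (Q : Set (Fin n → ℝ)) (hQ : MeasurableSet Q)
    (hv0 : volume Q ≠ 0) (hvT : volume Q ≠ ⊤)
    (w : (Fin n → ℝ) → ℝ) (hw0 : ∀ x, 0 ≤ w x) (hwm : Measurable w)
    {c δ ε : ℝ} (hc : 0 < c) (hε : 0 < ε) (hεδ : ε < δ)
    (hA : ∀ E : Set (Fin n → ℝ), MeasurableSet E → E ⊆ Q →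
      wMeas w E ≤ ENNReal.ofReal c * (volume E / volume Q) ^ δ * wMeas w Q) :
    (∫⁻ y in Q, ENNReal.ofReal (w y) ^ (1 + ε)) ≤
      ENNReal.ofReal (1 + ε * c / (δ - ε)) * (wMeas w Q / volume Q) ^ ε * wMeas w Q := by
  have hδ0 : 0 < δ := hε.trans hεδ
  have hδε : 0 < δ - ε := by linarith
  have hK : 0 < 1 + ε * c / (δ - ε) := by
    have := div_pos (mul_pos hε hc) hδε; linarith
  have hwem : Measurable fun y => ENNReal.ofReal (w y) := hwm.ennreal_ofReal
  set μQ := wMeas w Q with hμQdef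
  rcases eq_or_ne μQ 0 with h0 | h0
  · have hz := (lintegral_eq_zero_iff hwem).1 h0
    have hz2 : (∫⁻ y in Q, ENNReal.ofReal (w y) ^ (1 + ε)) = 0 := by
      rw [lintegral_eq_zero_iff (hwem.pow_const _)]
      filter_upwards [hz] with y hy
      simp only [Pi.zero_apply] at hy ⊢
      rw [hy, ENNReal.zero_rpow_of_pos (by linarith)]
    rw [hz2]; exact zero_le
  rcases eq_or_ne μQ ⊤ with hT | hT
  · have h1 : μQ / volume Q = ⊤ := by rw [hT]; exact ENNReal.top_div_of_ne_top hvT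
    have h2 : ENNReal.ofReal (1 + ε * c / (δ - ε)) ≠ 0 := ne_of_gt (ENNReal.ofReal_pos.2 hK)
    rw [h1, ENNReal.top_rpow_of_pos hε, hT, ENNReal.mul_top h2, ENNReal.top_mul_top]
    exact le_top
  -- main case
  set A := μQ / volume Q with hAdef
  have hA0 : A ≠ 0 := by simp [hAdef, ENNReal.div_eq_zero_iff, h0, hvT]
  have hAT : A ≠ ⊤ := (ENNReal.div_lt_top hT hv0).ne
  set a := A.toReal with hadef
  have ha : 0 < a := ENNReal.toReal_pos hA0 hAT
  have haA : ENNReal.ofReal a = A := ENNReal.ofReal_toReal hAT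
  set ν := (volume.restrict Q).withDensity fun y => ENNReal.ofReal (w y) with hνdef
  have step1 : (∫⁻ y in Q, ENNReal.ofReal (w y) ^ (1 + ε))
      = ∫⁻ y, ENNReal.ofReal (w y ^ ε) ∂ν := by
    rw [hνdef, lintegral_withDensity_eq_lintegral_mul _ hwem
      ((hwm.pow_const _).ennreal_ofReal)]
    refine lintegral_congr fun y => ?_
    simp only [Pi.mul_apply]
    rw [← ENNReal.ofReal_rpow_of_nonneg (hw0 y) hε.le, add_comm,
      ENNReal.rpow_add_of_nonneg ε 1 hε.le zero_le_one, ENNReal.rpow_one, mul_comm]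
  have step2 := MeasureTheory.lintegral_rpow_eq_lintegral_meas_lt_mul ν
    (Filter.Eventually.of_forall hw0) hwm.aemeasurable hε
  have hνS : ∀ t : ℝ, ν {y | t < w y} = wMeas w ({y | t < w y} ∩ Q) := by
    intro t
    rw [hνdef, withDensity_apply _ (measurableSet_lt measurable_const hwm),
      Measure.restrict_restrict (measurableSet_lt measurable_const hwm)]
    rfl
  have hb1 : ∀ t : ℝ, ν {y | t < w y} ≤ μQ := by
    intro t
    rw [hνS t]
    exact lintegral_mono_set inter_subset_right
  have hb2 : ∀ t : ℝ, 0 < t →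
      ν {y | t < w y} ≤ ENNReal.ofReal c * (A / ENNReal.ofReal t) ^ δ * μQ := by
    intro t ht
    have hEm : MeasurableSet ({y | t < w y} ∩ Q) :=
      (measurableSet_lt measurable_const hwm).inter hQ
    have h1 := hA _ hEm inter_subset_right
    have cheb : ENNReal.ofReal t * volume ({y | t < w y} ∩ Q)
        ≤ wMeas w ({y | t < w y} ∩ Q) := by
      calc ENNReal.ofReal t * volume ({y | t < w y} ∩ Q)
          = ∫⁻ _ in ({y | t < w y} ∩ Q), ENNReal.ofReal t := (setLIntegral_const _ _).symm
        _ ≤ ∫⁻ y in ({y | t < w y} ∩ Q), ENNReal.ofReal (w y) :=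
            setLIntegral_mono hwem fun y hy => ENNReal.ofReal_le_ofReal hy.1.le
    have hvE : volume ({y | t < w y} ∩ Q) ≤ μQ / ENNReal.ofReal t := by
      rw [ENNReal.le_div_iff_mul_le (Or.inl (ENNReal.ofReal_pos.2 ht).ne')
        (Or.inl ENNReal.ofReal_ne_top)]
      calc volume ({y | t < w y} ∩ Q) * ENNReal.ofReal t
          = ENNReal.ofReal t * volume ({y | t < w y} ∩ Q) := mul_comm _ _
        _ ≤ wMeas w ({y | t < w y} ∩ Q) := cheb
        _ ≤ μQ := lintegral_mono_set inter_subset_right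
    rw [hνS t]
    refine h1.trans ?_
    have hbase : volume ({y | t < w y} ∩ Q) / volume Q ≤ A / ENNReal.ofReal t := by
      calc volume ({y | t < w y} ∩ Q) / volume Q
          ≤ (μQ / ENNReal.ofReal t) / volume Q := by gcongr
        _ = A / ENNReal.ofReal t := by
            rw [hAdef, div_eq_mul_inv, div_eq_mul_inv, div_eq_mul_inv, div_eq_mul_inv,
              mul_right_comm]
    exact mul_le_mul_left (mul_le_mul_right (ENNReal.rpow_le_rpow hbase hδ0.le) _) _
  -- the two 1-d integrals
  have J1 : (∫⁻ t in Ioc (0:ℝ) a, ENNReal.ofReal (t ^ (ε - 1)))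
      = ENNReal.ofReal (a ^ ε / ε) := by
    have hint : IntegrableOn (fun t : ℝ => t ^ (ε - 1)) (Ioc 0 a) :=
      (intervalIntegrable_iff_integrableOn_Ioc_of_le ha.le).1
        (intervalIntegral.intervalIntegrable_rpow' (by linarith))
    rw [← ofReal_integral_eq_lintegral_ofReal hint ?_]
    · congr 1
      rw [← intervalIntegral.integral_of_le ha.le, integral_rpow (Or.inl (by linarith))]
      have h1 : ε - 1 + 1 = ε := by ring
      rw [h1, Real.zero_rpow hε.ne', sub_zero]
    · filter_upwards [ae_restrict_mem measurableSet_Ioc] with t ht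
      exact Real.rpow_nonneg ht.1.le _
  have J2 : (∫⁻ t in Ioi a, ENNReal.ofReal (t ^ (ε - 1 - δ)))
      = ENNReal.ofReal (a ^ (ε - δ) / (δ - ε)) := by
    rw [← ofReal_integral_eq_lintegral_ofReal
      (integrableOn_Ioi_rpow_of_lt (by linarith) ha) ?_]
    · congr 1
      rw [integral_Ioi_rpow_of_lt (by linarith) ha]
      have h1 : ε - 1 - δ + 1 = ε - δ := by ring
      rw [h1, div_eq_div_iff (ne_of_lt (by linarith : ε - δ < 0)) (ne_of_gt hδε)]
      ring
    · filter_upwards [ae_restrict_mem measurableSet_Ioi] with t ht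
      exact Real.rpow_nonneg (ha.trans ht).le _
  -- split the layer-cake integral
  have hsplit : (∫⁻ t in Ioi (0:ℝ), ν {y | t < w y} * ENNReal.ofReal (t ^ (ε - 1)))
      = (∫⁻ t in Ioc (0:ℝ) a, ν {y | t < w y} * ENNReal.ofReal (t ^ (ε - 1)))
        + ∫⁻ t in Ioi a, ν {y | t < w y} * ENNReal.ofReal (t ^ (ε - 1)) := by
    rw [← Set.Ioc_union_Ioi_eq_Ioi ha.le,
      lintegral_union measurableSet_Ioi (Set.Ioc_disjoint_Ioi le_rfl)]
  have hp1 : (∫⁻ t in Ioc (0:ℝ) a, ν {y | t < w y} * ENNReal.ofReal (t ^ (ε - 1)))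
      ≤ μQ * ENNReal.ofReal (a ^ ε / ε) := by
    calc (∫⁻ t in Ioc (0:ℝ) a, ν {y | t < w y} * ENNReal.ofReal (t ^ (ε - 1)))
        ≤ ∫⁻ t in Ioc (0:ℝ) a, μQ * ENNReal.ofReal (t ^ (ε - 1)) := by
          refine setLIntegral_mono (by fun_prop) fun t _ => ?_
          exact mul_le_mul_left (hb1 t) _
      _ = μQ * ∫⁻ t in Ioc (0:ℝ) a, ENNReal.ofReal (t ^ (ε - 1)) :=
          lintegral_const_mul _ (by fun_prop)
      _ = μQ * ENNReal.ofReal (a ^ ε / ε) := by rw [J1]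
  have hp2 : (∫⁻ t in Ioi a, ν {y | t < w y} * ENNReal.ofReal (t ^ (ε - 1)))
      ≤ (ENNReal.ofReal c * A ^ δ * μQ) * ENNReal.ofReal (a ^ (ε - δ) / (δ - ε)) := by
    calc (∫⁻ t in Ioi a, ν {y | t < w y} * ENNReal.ofReal (t ^ (ε - 1)))
        ≤ ∫⁻ t in Ioi a, (ENNReal.ofReal c * A ^ δ * μQ) * ENNReal.ofReal (t ^ (ε - 1 - δ)) := by
          refine setLIntegral_mono (by fun_prop) fun t ht => ?_
          have ht0 : 0 < t := ha.trans ht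
          have hT0 : ENNReal.ofReal t ≠ 0 := (ENNReal.ofReal_pos.2 ht0).ne'
          have hTt : ENNReal.ofReal t ≠ ⊤ := ENNReal.ofReal_ne_top
          calc ν {y | t < w y} * ENNReal.ofReal (t ^ (ε - 1))
              ≤ (ENNReal.ofReal c * (A / ENNReal.ofReal t) ^ δ * μQ)
                  * ENNReal.ofReal (t ^ (ε - 1)) := mul_le_mul_left (hb2 t ht0) _
            _ = (ENNReal.ofReal c * A ^ δ * μQ) * ENNReal.ofReal (t ^ (ε - 1 - δ)) := by
                rw [← ENNReal.ofReal_rpow_of_pos ht0, ← ENNReal.ofReal_rpow_of_pos ht0,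
                  div_eq_mul_inv, ENNReal.mul_rpow_of_nonneg _ _ hδ0.le, ENNReal.inv_rpow,
                  show ε - 1 - δ = ε - 1 + (-δ) by ring,
                  ENNReal.rpow_add _ _ hT0 hTt, ENNReal.rpow_neg]
                ring
      _ = (ENNReal.ofReal c * A ^ δ * μQ) * ∫⁻ t in Ioi a, ENNReal.ofReal (t ^ (ε - 1 - δ)) :=
          lintegral_const_mul _ (by fun_prop)
      _ = (ENNReal.ofReal c * A ^ δ * μQ) * ENNReal.ofReal (a ^ (ε - δ) / (δ - ε)) := by rw [J2]
  -- assemble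
  have hrw : (ENNReal.ofReal a) ^ ε = ENNReal.ofReal (a ^ ε) := ENNReal.ofReal_rpow_of_pos ha
  have hrwδ : (ENNReal.ofReal a) ^ δ = ENNReal.ofReal (a ^ δ) := ENNReal.ofReal_rpow_of_pos ha
  have r1 : ε * (a ^ ε / ε) = a ^ ε := by field_simp
  have r2 : ε * c * a ^ δ * (a ^ (ε - δ) / (δ - ε)) = ε * c / (δ - ε) * a ^ ε := by
    rw [show ε * c * a ^ δ * (a ^ (ε - δ) / (δ - ε))
        = ε * c / (δ - ε) * (a ^ δ * a ^ (ε - δ)) from by ring,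
      ← Real.rpow_add ha, show δ + (ε - δ) = ε from by ring]
  have hane : 0 ≤ a ^ ε := Real.rpow_nonneg ha.le _
  have hadne : 0 ≤ a ^ δ := Real.rpow_nonneg ha.le _
  rw [step1, step2, hsplit]
  calc ENNReal.ofReal ε
        * ((∫⁻ t in Ioc (0:ℝ) a, ν {y | t < w y} * ENNReal.ofReal (t ^ (ε - 1)))
          + ∫⁻ t in Ioi a, ν {y | t < w y} * ENNReal.ofReal (t ^ (ε - 1)))
      ≤ ENNReal.ofReal ε * (μQ * ENNReal.ofReal (a ^ ε / ε)
        + (ENNReal.ofReal c * A ^ δ * μQ) * ENNReal.ofReal (a ^ (ε - δ) / (δ - ε))) := by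
        gcongr
    _ = μQ * (ENNReal.ofReal ε * ENNReal.ofReal (a ^ ε / ε))
        + μQ * (ENNReal.ofReal ε * ENNReal.ofReal c * ENNReal.ofReal (a ^ δ)
          * ENNReal.ofReal (a ^ (ε - δ) / (δ - ε))) := by
        rw [← haA, hrwδ]; ring
    _ = μQ * ENNReal.ofReal (a ^ ε) + μQ * ENNReal.ofReal (ε * c / (δ - ε) * a ^ ε) := by
        rw [← ENNReal.ofReal_mul hε.le, r1, ← ENNReal.ofReal_mul hε.le,
          ← ENNReal.ofReal_mul (mul_nonneg hε.le hc.le),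
          ← ENNReal.ofReal_mul (mul_nonneg (mul_nonneg hε.le hc.le) hadne), r2]
    _ = μQ * ENNReal.ofReal (a ^ ε + ε * c / (δ - ε) * a ^ ε) := by
        rw [ENNReal.ofReal_add hane (mul_nonneg (div_nonneg (mul_nonneg hε.le hc.le) hδε.le) hane),
          mul_add]
    _ = ENNReal.ofReal (1 + ε * c / (δ - ε)) * A ^ ε * μQ := by
        rw [show a ^ ε + ε * c / (δ - ε) * a ^ ε = (1 + ε * c / (δ - ε)) * a ^ ε from by ring,
          ENNReal.ofReal_mul hK.le, ← haA, hrw]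
        ring

/-- Lemma 4.3: if `(u,v) ∈ A_{p,q}^β` and
`σ = v^{-1/(p-1)} ∈ A_∞^β`, then there is `δ > 0` such that, with
`p̃ = p - δ` and `q̃ = ((p-δ)/p)q`, one has `1 < p̃ < p`, `q̃ < q`,
`p̃ ≤ q̃`, `p/q = p̃/q̃` and `(u,v) ∈ A_{p̃,q̃}^β`. -/
theorem Apq_openness {n : ℕ} (Ω : Set (Fin n → ℝ))
    (hΩo : IsOpen Ω) (hΩne : Ω.Nonempty) (hΩpr : Ω ≠ Set.univ)
    (p q β : ℝ) (hp : 1 < p) (hpq : p ≤ q) (hβ0 : 0 < β) (hβ1 : β < 1)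
    (u v : (Fin n → ℝ) → ℝ) (hu : IsWeight Ω u) (hv : IsWeight Ω v)
    (hApq : Apq Ω β p q u v) (hσA : AinfB Ω β (sigW v p)) :
    ∃ δ : ℝ, 0 < δ ∧ 1 < p - δ ∧ p - δ < p ∧ ((p - δ) / p) * q < q ∧
      p - δ ≤ ((p - δ) / p) * q ∧
      p / q = (p - δ) / (((p - δ) / p) * q) ∧
      Apq Ω β (p - δ) (((p - δ) / p) * q) u v := by
  obtain ⟨hv0, hvm, hvloc⟩ := hv
  obtain ⟨C, hCt, hC⟩ := hApq
  obtain ⟨c, d, hc, hd, hAinf⟩ := hσA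
  set ε := d / 2 with hεdef
  have hε : 0 < ε := by positivity
  have hεd : ε < d := by rw [hεdef]; linarith
  have hp0 : 0 < p := by linarith
  have hp1 : 0 < p - 1 := by linarith
  have h1ε : 0 < 1 + ε := by linarith
  set δ := (p - 1) * ε / (1 + ε) with hδdef
  have hδ : 0 < δ := by positivity
  have hkey : p - δ - 1 = (p - 1) / (1 + ε) := by
    rw [hδdef]; field_simp; ring
  have hpt1 : 1 < p - δ := by
    have h2 : 0 < (p - 1) / (1 + ε) := div_pos hp1 h1ε
    linarith
  have hq0 : 0 < q := by linarith
  have hpδ0 : (0:ℝ) < p - δ := by linarith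
  refine ⟨δ, hδ, hpt1, by linarith, ?_, ?_, ?_, ?_⟩
  · have h3 : (p - δ) / p < 1 := (div_lt_one hp0).2 (by linarith)
    nlinarith
  · rw [div_mul_eq_mul_div, le_div_iff₀ hp0]
    nlinarith
  · field_simp
  · -- the A_{p̃,q̃} condition
    set σ := sigW v p with hσdef
    have hσ0 : ∀ y, 0 ≤ σ y := fun y => Real.rpow_nonneg (hv0 y) _
    have hσm : Measurable σ := hvm.pow_const _
    have hptwise : ∀ y, sigW v (p - δ) y = σ y ^ (1 + ε) := by
      intro y
      rw [hσdef]
      show v y ^ (-(1 / (p - δ - 1))) = (v y ^ (-(1 / (p - 1)))) ^ (1 + ε)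
      rw [← Real.rpow_mul (hv0 y)]
      congr 1
      rw [hkey]
      field_simp
    set K := 1 + ε * c / (d - ε) with hKdef
    have hK0 : 0 ≤ K := by
      have := div_nonneg (mul_nonneg hε.le hc.le) (by linarith : (0:ℝ) ≤ d - ε)
      rw [hKdef]; linarith
    refine ⟨(ENNReal.ofReal K) ^ (p - δ - 1) * C, ?_, ?_⟩
    · exact ENNReal.mul_ne_top
        (ENNReal.rpow_ne_top_of_nonneg (by linarith) ENNReal.ofReal_ne_top) hCt
    · intro x l hF
      obtain ⟨hx, hl, hlβ⟩ := hF
      have hvol0 : volume (Cube x l) ≠ 0 := (Metric.measure_closedBall_pos volume x hl).ne'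
      have hvolT : volume (Cube x l) ≠ ⊤ := (isCompact_closedBall x l).measure_lt_top.ne
      have hrhi := rhi_aux (Cube x l) measurableSet_closedBall hvol0 hvolT σ hσ0 hσm hc hε hεd
        (fun E hE hEQ => hAinf x l ⟨hx, hl, hlβ⟩ E hE hEQ)
      have hσt : wMeas (sigW v (p - δ)) (Cube x l)
          = ∫⁻ y in Cube x l, (ENNReal.ofReal (σ y)) ^ (1 + ε) := by
        refine lintegral_congr fun y => ?_
        rw [hptwise y, ← ENNReal.ofReal_rpow_of_nonneg (hσ0 y) (by linarith)]
      set volQ := volume (Cube x l) with hvolQdef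
      set S := wMeas σ (Cube x l) / volQ with hSdef
      have hS' : wMeas (sigW v (p - δ)) (Cube x l) / volQ ≤ ENNReal.ofReal K * S ^ (1 + ε) := by
        calc wMeas (sigW v (p - δ)) (Cube x l) / volQ
            ≤ (ENNReal.ofReal K * S ^ ε * wMeas σ (Cube x l)) / volQ := by
              rw [hσt]; gcongr
          _ = ENNReal.ofReal K * (S ^ ε * (wMeas σ (Cube x l) / volQ)) := by
              rw [div_eq_mul_inv, div_eq_mul_inv]; ring
          _ = ENNReal.ofReal K * S ^ (1 + ε) := by
              rw [ENNReal.rpow_add_of_nonneg 1 ε zero_le_one hε.le, ENNReal.rpow_one]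
              ring
      have hCx := hC x l ⟨hx, hl, hlβ⟩
      have hexp : (p - δ) / ((p - δ) / p * q) = p / q := by
        field_simp
      rw [hexp]
      calc (wMeas u (Cube x l) / volQ) ^ (p / q)
            * (wMeas (sigW v (p - δ)) (Cube x l) / volQ) ^ (p - δ - 1)
          ≤ (wMeas u (Cube x l) / volQ) ^ (p / q)
            * (ENNReal.ofReal K * S ^ (1 + ε)) ^ (p - δ - 1) := by
            gcongr
            all_goals first | exact hS' | linarith
        _ = (ENNReal.ofReal K) ^ (p - δ - 1)
            * ((wMeas u (Cube x l) / volQ) ^ (p / q) * S ^ (p - 1)) := by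
            rw [ENNReal.mul_rpow_of_nonneg _ _ (by linarith : (0:ℝ) ≤ p - δ - 1),
              ← ENNReal.rpow_mul,
              show (1 + ε) * (p - δ - 1) = p - 1 from by rw [hkey]; field_simp]
            ring
        _ ≤ (ENNReal.ofReal K) ^ (p - δ - 1) * C := by
            gcongr
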